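/- arXiv:2209.02135 — 3 statements merged into one kernel-verified Lean document; each statement's English description precedes it below -/
import Mathlib

section
/- For any real a > 0, real t > 0, and natural number u, the rising factorial (a·t)_{(u)} equals the sum over v from 0 to u of C(u, v; a) · (t)_{(v)}, where C(u, v; a) is the generalized factorial coefficient. -/
open Finset

noncomputable def risingFactorial (x : ℝ) (u : ℕ) : ℝ :=
  ∏ j ∈ Finset.range u, (x + j)

noncomputable def genFacCoef (u v : ℕ) (a : ℝ) : ℝ :=
  (1 / (v.factorial : ℝ)) *
    ∑ i ∈ Finset.range (v + 1),
      (-1 : ℝ) ^ i * (v.choose i : ℝ) * risingFactorial (-(i * a)) u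

def stirling1 : ℕ → ℕ → ℕ
  | 0, 0 => 1
  | 0, _ + 1 => 0
  | _ + 1, 0 => 0
  | u + 1, v + 1 => u * stirling1 u (v + 1) + stirling1 u v

lemma rf_succ (x : ℝ) (u : ℕ) :
    risingFactorial x (u + 1) = risingFactorial x u * (x + u) := by
  simp [risingFactorial, Finset.prod_range_succ]

lemma gfc_zero_col (u : ℕ) (a : ℝ) : genFacCoef u 0 a = risingFactorial 0 u := by
  simp [genFacCoef]

lemma key_scalar (v i : ℕ) (hi : i ≤ v + 1) :
    (1 / ((v+1).factorial : ℝ)) * ((v+1).choose i : ℝ) * ((v : ℝ) + 1 - i)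
      = (1 / (v.factorial : ℝ)) * (v.choose i : ℝ) := by
  have hfac : (((v + 1).factorial : ℕ) : ℝ) = ((v:ℝ) + 1) * (v.factorial : ℝ) := by
    rw [Nat.factorial_succ]; push_cast; ring
  have hchoose : ((v + 1).choose i : ℝ) * ((v : ℝ) + 1 - i) = (v.choose i : ℝ) * ((v:ℝ) + 1) := by
    have h2 : (v.choose i) * (v + 1) = (v + 1).choose i * (v + 1 - i) := Nat.choose_mul_succ_eq v i
    have h3 : ((v + 1 - i : ℕ) : ℝ) = (v : ℝ) + 1 - i := by
      rw [Nat.cast_sub hi]; push_cast; ring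
    have := congrArg (fun n : ℕ => (n : ℝ)) h2
    push_cast at this
    rw [h3] at this
    linarith
  have hv : (v.factorial : ℝ) ≠ 0 := Nat.cast_ne_zero.mpr (Nat.factorial_ne_zero v)
  have hv1 : ((v:ℝ) + 1) ≠ 0 := by positivity
  rw [hfac]
  field_simp
  linear_combination hchoose

lemma gfc_rec (u v : ℕ) (a : ℝ) :
    genFacCoef (u + 1) (v + 1) a
      = a * genFacCoef u v a + ((u : ℝ) - a * ((v : ℝ) + 1)) * genFacCoef u (v + 1) a := by
  have hext : (1 / (v.factorial : ℝ)) * ∑ i ∈ Finset.range (v + 1),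
      (-1:ℝ)^i * (v.choose i : ℝ) * risingFactorial (-(i * a)) u
      = (1 / (v.factorial : ℝ)) * ∑ i ∈ Finset.range (v + 1 + 1),
      (-1:ℝ)^i * (v.choose i : ℝ) * risingFactorial (-(i * a)) u := by
    rw [Finset.sum_range_succ (n := v + 1)]
    simp [Nat.choose_eq_zero_of_lt (Nat.lt_succ_self v)]
  unfold genFacCoef
  rw [hext]
  simp only [Finset.mul_sum]
  rw [← Finset.sum_add_distrib]
  refine Finset.sum_congr rfl fun i hi => ?_
  have hi' : i ≤ v + 1 := Nat.lt_succ_iff.mp (Finset.mem_range.mp hi)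
  rw [rf_succ]
  have hk := key_scalar v i hi'
  push_cast at hk ⊢
  linear_combination a * (-1:ℝ)^i * risingFactorial (-((i:ℝ) * a)) u * hk

lemma gfc_vanish (a : ℝ) : ∀ u v : ℕ, u < v → genFacCoef u v a = 0 := by
  intro u
  induction u with
  | zero =>
    intro v hv
    have hvne : v ≠ 0 := hv.ne'
    unfold genFacCoef
    have h1 : ∑ i ∈ Finset.range (v + 1),
        (-1 : ℝ) ^ i * (v.choose i : ℝ) * risingFactorial (-(i * a)) 0
        = ∑ i ∈ Finset.range (v + 1), (-1 : ℝ) ^ i * (v.choose i : ℝ) := by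
      refine Finset.sum_congr rfl fun i _ => ?_
      simp [risingFactorial]
    rw [h1]
    have hz := Int.alternating_sum_range_choose_of_ne hvne
    have h2 : ∑ i ∈ Finset.range (v + 1), (-1 : ℝ) ^ i * (v.choose i : ℝ)
        = ((∑ i ∈ Finset.range (v + 1), (-1 : ℤ) ^ i * (v.choose i : ℤ) : ℤ) : ℝ) := by
      push_cast
      rfl
    rw [h2, hz]
    simp
  | succ u ih =>
    intro v hv
    match v, hv with
    | w + 1, hv =>
      have hw : u < w := Nat.lt_of_succ_lt_succ hv
      rw [gfc_rec, ih w hw, ih (w + 1) (hw.trans (Nat.lt_succ_self w))]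
      ring

theorem risingFactorial_mul_eq_sum_genFacCoef (a t : ℝ) (ha : 0 < a) (ht : 0 < t) (u : ℕ) :
    risingFactorial (a * t) u
      = ∑ v ∈ Finset.range (u + 1), genFacCoef u v a * risingFactorial t v := by
  induction u with
  | zero => simp [risingFactorial, genFacCoef]
  | succ u ih =>
    rw [rf_succ, ih, Finset.sum_mul]
    have pointwise : ∀ v ∈ Finset.range (u + 1),
        genFacCoef u v a * risingFactorial t v * (a * t + u)
        = a * genFacCoef u v a * risingFactorial t (v + 1)
          + ((u : ℝ) - a * v) * genFacCoef u v a * risingFactorial t v := by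
      intro v _
      rw [rf_succ]
      ring
    rw [Finset.sum_congr rfl pointwise, Finset.sum_add_distrib]
    -- decompose the RHS
    rw [Finset.sum_range_succ' (fun v => genFacCoef (u + 1) v a * risingFactorial t v) (u + 1)]
    have hrec : ∑ v ∈ Finset.range (u + 1),
        genFacCoef (u + 1) (v + 1) a * risingFactorial t (v + 1)
        = ∑ v ∈ Finset.range (u + 1),
          (a * genFacCoef u v a * risingFactorial t (v + 1)
            + ((u : ℝ) - a * ((v : ℝ) + 1)) * genFacCoef u (v + 1) a * risingFactorial t (v + 1)) := by
      refine Finset.sum_congr rfl fun v _ => ?_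
      rw [gfc_rec]; ring
    rw [hrec, Finset.sum_add_distrib]
    -- show second LHS sum equals second RHS sum plus the v = 0 term
    have hD : ∑ v ∈ Finset.range (u + 1),
        ((u : ℝ) - a * v) * genFacCoef u v a * risingFactorial t v
        = (∑ v ∈ Finset.range (u + 1),
            ((u : ℝ) - a * ((v : ℝ) + 1)) * genFacCoef u (v + 1) a * risingFactorial t (v + 1))
          + genFacCoef (u + 1) 0 a * risingFactorial t 0 := by
      rw [Finset.sum_range_succ'
            (fun v => ((u : ℝ) - a * v) * genFacCoef u v a * risingFactorial t v) u,
          Finset.sum_range_succ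
            (fun v => ((u : ℝ) - a * ((v : ℝ) + 1)) * genFacCoef u (v + 1) a
              * risingFactorial t (v + 1)) u,
          gfc_vanish a u (u + 1) (Nat.lt_succ_self u),
          gfc_zero_col, gfc_zero_col, rf_succ 0 u]
      have hcongr : ∀ v ∈ Finset.range u,
          ((u : ℝ) - a * ((v + 1 : ℕ) : ℝ)) * genFacCoef u (v + 1) a * risingFactorial t (v + 1)
          = ((u : ℝ) - a * ((v : ℝ) + 1)) * genFacCoef u (v + 1) a * risingFactorial t (v + 1) := by
        intro v _
        push_cast
        ring
      rw [Finset.sum_congr rfl hcongr]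
      push_cast
      ring
    rw [hD]
    ring
end

section
/- For fixed natural numbers u and v with 1 ≤ v ≤ u, the limit as α → 0⁺ of C(u, v; α)/α^v equals the signless Stirling number of the first kind |s(u, v)|. -/
open Finset

lemma stirling1_zero_of_lt : ∀ u k : ℕ, u < k → stirling1 u k = 0 := by
  intro u
  induction u with
  | zero => intro k hk; match k, hk with | (n+1), _ => rfl
  | succ u ih =>
    intro k hk
    match k, hk with
    | (k+1), hk =>
      have h1 : u < k + 1 := by omega
      have h2 : u < k := by omega
      simp [stirling1, ih _ h1, ih _ h2]

lemma mul_stirling1_zero (u : ℕ) : (u : ℝ) * (stirling1 u 0 : ℝ) = 0 := by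
  cases u with
  | zero => simp
  | succ u => simp [stirling1]

lemma risingFactorial_eq_sum (x : ℝ) (u : ℕ) :
    risingFactorial x u = ∑ k ∈ Finset.range (u + 1), (stirling1 u k : ℝ) * x ^ k := by
  induction u with
  | zero => simp [risingFactorial, stirling1]
  | succ u ih =>
    have h1 : risingFactorial x (u + 1) = risingFactorial x u * (x + u) := by
      rw [risingFactorial, risingFactorial, Finset.prod_range_succ]
    have hrec : ∀ k, (stirling1 (u+1) (k+1) : ℝ) = u * stirling1 u (k+1) + stirling1 u k := by
      intro k
      have : stirling1 (u+1) (k+1) = u * stirling1 u (k+1) + stirling1 u k := rfl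
      rw [this]; push_cast; ring
    have h0 : (stirling1 (u+1) 0 : ℝ) = 0 := by simp [stirling1]
    rw [h1, ih, Finset.sum_range_succ' (fun k => (stirling1 (u+1) k : ℝ) * x ^ k) (u+1)]
    simp only [hrec, h0, zero_mul, add_zero]
    have hS : ∑ k ∈ Finset.range (u+1), (stirling1 u k : ℝ) * x ^ k
        = ∑ k ∈ Finset.range u, (stirling1 u (k+1) : ℝ) * x ^ (k+1) + (stirling1 u 0 : ℝ) := by
      rw [Finset.sum_range_succ' (fun k => (stirling1 u k : ℝ) * x ^ k) u]
      simp
    have hT : ∑ k ∈ Finset.range (u+1),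
        ((u : ℝ) * (stirling1 u (k+1) : ℝ) + (stirling1 u k : ℝ)) * x ^ (k+1)
        = (u : ℝ) * ∑ k ∈ Finset.range u, (stirling1 u (k+1) : ℝ) * x ^ (k+1)
          + x * ∑ k ∈ Finset.range (u+1), (stirling1 u k : ℝ) * x ^ k := by
      have l1 : ∑ k ∈ Finset.range (u+1),
          ((u : ℝ) * (stirling1 u (k+1) : ℝ) + (stirling1 u k : ℝ)) * x ^ (k+1)
          = ∑ k ∈ Finset.range (u+1), (u : ℝ) * ((stirling1 u (k+1) : ℝ) * x ^ (k+1))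
            + ∑ k ∈ Finset.range (u+1), x * ((stirling1 u k : ℝ) * x ^ k) := by
        rw [← Finset.sum_add_distrib]
        exact Finset.sum_congr rfl fun k _ => by ring
      rw [l1, Finset.mul_sum, Finset.mul_sum]
      congr 1
      rw [Finset.sum_range_succ]
      rw [stirling1_zero_of_lt u (u+1) (by omega)]
      simp
    rw [hT, hS]
    have := mul_stirling1_zero u
    linear_combination this

noncomputable def Salt (v k : ℕ) : ℝ :=
  ∑ i ∈ Finset.range (v + 1), (-1 : ℝ) ^ i * (v.choose i : ℝ) * (i : ℝ) ^ k

lemma Salt_rec (v k : ℕ) :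
    Salt (v + 1) k = Salt v k - ∑ m ∈ Finset.range (k + 1), (k.choose m : ℝ) * Salt v m := by
  unfold Salt
  rw [Finset.sum_range_succ' (fun i => (-1:ℝ)^i * ((v+1).choose i : ℝ) * (i:ℝ)^k) (v+1)]
  have hcc : ∀ i : ℕ, (((v+1).choose (i+1) : ℕ) : ℝ) = (v.choose i : ℝ) + (v.choose (i+1) : ℝ) := by
    intro i; rw [Nat.choose_succ_succ]; push_cast; ring
  simp only [hcc]
  have split : ∑ i ∈ Finset.range (v+1),
      (-1:ℝ)^(i+1) * ((v.choose i : ℝ) + (v.choose (i+1) : ℝ)) * ((i:ℝ)+1)^k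
      = ∑ i ∈ Finset.range (v+1), (-1:ℝ)^(i+1) * (v.choose i : ℝ) * ((i:ℝ)+1)^k
        + ∑ i ∈ Finset.range (v+1), (-1:ℝ)^(i+1) * (v.choose (i+1) : ℝ) * ((i:ℝ)+1)^k := by
    rw [← Finset.sum_add_distrib]
    exact Finset.sum_congr rfl fun i _ => by ring
  have cast1 : ∀ i : ℕ, ((i+1 : ℕ) : ℝ) = (i:ℝ)+1 := by intro i; push_cast; ring
  simp only [cast1]
  rw [split]
  -- second piece equals Salt v k minus its i=0 term
  have hB : ∑ i ∈ Finset.range (v+1), (-1:ℝ)^(i+1) * (v.choose (i+1) : ℝ) * ((i:ℝ)+1)^k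
      = (∑ i ∈ Finset.range (v+1), (-1:ℝ)^i * (v.choose i : ℝ) * (i:ℝ)^k) - (0:ℝ)^k := by
    rw [Finset.sum_range_succ' (fun i => (-1:ℝ)^i * (v.choose i : ℝ) * (i:ℝ)^k) v]
    rw [Finset.sum_range_succ (fun i => (-1:ℝ)^(i+1) * (v.choose (i+1) : ℝ) * ((i:ℝ)+1)^k) v]
    rw [Nat.choose_succ_self]
    simp only [cast1, Nat.cast_zero, Nat.choose_zero_right, Nat.cast_one, pow_zero, one_mul,
      Nat.cast_ofNat, mul_one, zero_mul, mul_zero, add_zero]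
    ring
  rw [hB]
  -- first piece: expand (i+1)^k by binomial and swap sums
  have hA : ∑ i ∈ Finset.range (v+1), (-1:ℝ)^(i+1) * (v.choose i : ℝ) * ((i:ℝ)+1)^k
      = -∑ m ∈ Finset.range (k+1), (k.choose m : ℝ)
          * ∑ i ∈ Finset.range (v+1), (-1:ℝ)^i * (v.choose i : ℝ) * (i:ℝ)^m := by
    have binom : ∀ i : ℕ, ((i:ℝ)+1)^k = ∑ m ∈ Finset.range (k+1), (i:ℝ)^m * (k.choose m : ℝ) := by
      intro i
      rw [add_pow]
      exact Finset.sum_congr rfl fun m _ => by ring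
    simp only [binom, Finset.mul_sum]
    rw [Finset.sum_comm, ← Finset.sum_neg_distrib]
    refine Finset.sum_congr rfl fun m _ => ?_
    rw [← Finset.sum_neg_distrib]
    exact Finset.sum_congr rfl fun i _ => by ring
  rw [hA]
  simp only [Nat.choose_zero_right, Nat.cast_one, one_mul]
  ring

lemma Salt_spec : ∀ v : ℕ, (∀ k, k < v → Salt v k = 0) ∧
    Salt v v = (-1 : ℝ) ^ v * (v.factorial : ℝ) := by
  intro v
  induction v with
  | zero =>
    constructor
    · intro k hk; omega
    · simp [Salt]
  | succ v ih =>
    obtain ⟨ih0, ih1⟩ := ih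
    have key : ∀ k, k ≤ v → Salt (v+1) k = 0 := by
      intro k hk
      rw [Salt_rec]
      by_cases h : k < v
      · have hsum : ∑ m ∈ Finset.range (k+1), (k.choose m : ℝ) * Salt v m = 0 :=
          Finset.sum_eq_zero fun m hm =>
            by rw [ih0 m (lt_of_le_of_lt (by simpa [Nat.lt_succ_iff] using hm) h), mul_zero]
        rw [ih0 k h, hsum, sub_zero]
      · have hkv : k = v := by omega
        subst hkv
        have hsum : ∑ m ∈ Finset.range (k+1), (k.choose m : ℝ) * Salt k m = Salt k k := by
          rw [Finset.sum_range_succ, Finset.sum_eq_zero (fun m hm => by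
            rw [ih0 m (Finset.mem_range.mp hm), mul_zero]), Nat.choose_self]
          simp
        rw [hsum, sub_self]
    refine ⟨fun k hk => key k (by omega), ?_⟩
    rw [Salt_rec]
    rw [Finset.sum_range_succ, Finset.sum_range_succ]
    rw [Finset.sum_eq_zero (fun m hm => by
      rw [ih0 m (by have := Finset.mem_range.mp hm; omega), mul_zero])]
    rw [Nat.choose_self, Nat.choose_succ_self_right, ih1]
    rw [Nat.factorial_succ]
    push_cast
    ring

lemma genFacCoef_eq (u v : ℕ) (a : ℝ) :
    genFacCoef u v a = (1 / (v.factorial : ℝ)) *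
      ∑ k ∈ Finset.range (u + 1), (stirling1 u k : ℝ) * (-a) ^ k * Salt v k := by
  unfold genFacCoef
  congr 1
  calc ∑ i ∈ Finset.range (v+1), (-1:ℝ)^i * (v.choose i : ℝ) * risingFactorial (-(i * a)) u
      = ∑ i ∈ Finset.range (v+1), ∑ k ∈ Finset.range (u+1),
          (stirling1 u k : ℝ) * (-a)^k * ((-1:ℝ)^i * (v.choose i : ℝ) * (i:ℝ)^k) := by
        refine Finset.sum_congr rfl fun i _ => ?_
        rw [risingFactorial_eq_sum, Finset.mul_sum]
        refine Finset.sum_congr rfl fun k _ => ?_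
        rw [show -((i:ℝ) * a) = (-a) * (i:ℝ) by ring, mul_pow]
        ring
    _ = ∑ k ∈ Finset.range (u+1), (stirling1 u k : ℝ) * (-a)^k * Salt v k := by
        rw [Finset.sum_comm]
        refine Finset.sum_congr rfl fun k _ => ?_
        rw [Salt, Finset.mul_sum]

theorem genFacCoef_div_pow_tendsto_stirling1 (u v : ℕ) (hv1 : 1 ≤ v) (hvu : v ≤ u) :
    Filter.Tendsto (fun α : ℝ => genFacCoef u v α / α ^ v)
      (nhdsWithin 0 (Set.Ioi 0)) (nhds (stirling1 u v : ℝ)) := by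
  obtain ⟨hS0, hSv⟩ := Salt_spec v
  set g : ℝ → ℝ := fun a => (1 / (v.factorial : ℝ)) *
    ∑ k ∈ Finset.Ico v (u + 1), (stirling1 u k : ℝ) * (-1:ℝ) ^ k * Salt v k * a ^ (k - v)
    with hg_def
  have hfact : (v.factorial : ℝ) ≠ 0 := Nat.cast_ne_zero.mpr v.factorial_ne_zero
  have hgcont : Continuous g := by
    apply continuous_const.mul
    exact continuous_finset_sum _ fun k _ => continuous_const.mul (continuous_pow _)
  have hg0 : g 0 = (stirling1 u v : ℝ) := by
    rw [hg_def]
    simp only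
    rw [Finset.sum_eq_single v]
    · rw [hSv, Nat.sub_self, pow_zero, mul_one]
      have hsq : (-1:ℝ)^v * ((-1:ℝ)^v) = 1 := by
        rw [← pow_add]; exact Even.neg_one_pow ⟨v, rfl⟩
      field_simp
      linear_combination (stirling1 u v : ℝ) * hsq
    · intro k hk hne
      have hkv : v < k := by
        rcases Finset.mem_Ico.mp hk with ⟨h1, _⟩; omega
      rw [zero_pow (by omega : k - v ≠ 0), mul_zero]
    · intro h
      exact absurd (Finset.mem_Ico.mpr ⟨le_refl v, by omega⟩) h
  have heq : ∀ a ∈ Set.Ioi (0:ℝ), genFacCoef u v a / a ^ v = g a := by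
    intro a ha
    have ha0 : a ≠ 0 := ne_of_gt ha
    have key : genFacCoef u v a = a ^ v * g a := by
      rw [genFacCoef_eq, hg_def]
      simp only
      have hsum : ∑ k ∈ Finset.range (u+1), (stirling1 u k : ℝ) * (-a)^k * Salt v k
          = ∑ k ∈ Finset.Ico v (u+1), (stirling1 u k : ℝ) * (-a)^k * Salt v k := by
        refine (Finset.sum_subset ?_ ?_).symm
        · intro k hk
          simp only [Finset.mem_Ico] at hk
          exact Finset.mem_range.mpr hk.2
        · intro k hk hnot
          have hklt : k < v := by
            simp only [Finset.mem_Ico, Finset.mem_range, not_and, not_le] at hk hnot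
            omega
          rw [hS0 k hklt, mul_zero]
      have hterm : ∀ k ∈ Finset.Ico v (u+1), (stirling1 u k : ℝ) * (-a)^k * Salt v k
          = a^v * ((stirling1 u k : ℝ) * (-1:ℝ)^k * Salt v k * a^(k-v)) := by
        intro k hk
        have hvk : v ≤ k := (Finset.mem_Ico.mp hk).1
        rw [show (-a)^k = (-1:ℝ)^k * a^k by rw [neg_pow],
          show a^k = a^v * a^(k-v) by rw [← pow_add, Nat.add_sub_cancel' hvk]]
        ring
      rw [hsum, Finset.sum_congr rfl hterm, ← Finset.mul_sum]
      ring
    rw [key, mul_comm, mul_div_assoc, div_self (pow_ne_zero v ha0), mul_one]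
  have hmain : Filter.Tendsto g (nhdsWithin 0 (Set.Ioi 0)) (nhds (stirling1 u v : ℝ)) := by
    rw [← hg0]
    exact ((hgcont.tendsto 0).mono_left nhdsWithin_le_nhds)
  refine hmain.congr' ?_
  exact Filter.eventuallyEq_of_mem self_mem_nhdsWithin fun a ha => (heq a ha).symm
end

section
/- Fix z > 0 and k ≥ 1. Then the limit as n → ∞ of z^k · C(n, k; α_n) / Σ_{j=0}^{n} z^j · C(n, j; α_n), evaluated at any fixed α ∈ (0,1) with the coefficients C(n, k; α) normalized so the ratio is well-defined, equals e^{-z} · z^{k-1}/(k-1)!; equivalently, the normalized generalized factorial coefficients z^k C(n,k;α)/Σ_k z^k C(n,k;α) converge to a shifted Poisson(z) mass at k-1 as n → ∞. -/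
open Finset

open Filter

section AuxPoisson
variable {α z : ℝ}

lemma abs_den_pos (hα0 : 0 < α) (hα1 : α < 1) (j : ℕ) : 0 < |(-α) + (j : ℝ)| := by
  rcases Nat.eq_zero_or_pos j with h | h
  · subst h; simp [abs_pos]; linarith
  · have : (1 : ℝ) ≤ j := by exact_mod_cast h
    have : 0 < -α + (j : ℝ) := by linarith
    exact abs_pos.mpr (ne_of_gt this)

lemma rf_neg_alpha_ne_zero (hα0 : 0 < α) (hα1 : α < 1) (n : ℕ) :
    risingFactorial (-α) n ≠ 0 := by
  rw [risingFactorial]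
  refine Finset.prod_ne_zero_iff.mpr fun j _ => ?_
  have := abs_den_pos hα0 hα1 j
  exact fun h => by simp [h] at this

noncomputable def Rrat (α : ℝ) (i n : ℕ) : ℝ :=
  risingFactorial (-((i : ℝ) * α)) n / risingFactorial (-α) n

lemma Rrat_one (hα0 : 0 < α) (hα1 : α < 1) (n : ℕ) : Rrat α 1 n = 1 := by
  rw [Rrat]
  norm_num
  exact rf_neg_alpha_ne_zero hα0 hα1 n

lemma Rrat_zero (hα0 : 0 < α) (hα1 : α < 1) {n : ℕ} (hn : 1 ≤ n) : Rrat α 0 n = 0 := by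
  rw [Rrat]
  have : risingFactorial (-((0 : ℕ) * α)) n = 0 := by
    rw [risingFactorial]
    refine Finset.prod_eq_zero (Finset.mem_range.mpr hn) ?_
    norm_num
  rw [this, zero_div]

lemma abs_Rrat_eq (i n : ℕ) :
    |Rrat α i n| = ∏ j ∈ range n, (|(-((i : ℝ) * α)) + j| / |(-α) + j|) := by
  rw [Rrat, abs_div, risingFactorial, risingFactorial, Finset.abs_prod, Finset.abs_prod,
    ← Finset.prod_div_distrib]

noncomputable def Bnd (α : ℝ) (i : ℕ) : ℝ := ∏ j ∈ range i, ((i : ℝ) / |(-α) + j|)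

lemma Bnd_nonneg (i : ℕ) : 0 ≤ Bnd α i :=
  Finset.prod_nonneg fun j _ => div_nonneg (Nat.cast_nonneg i) (abs_nonneg _)

lemma one_le_Bnd_factor (hα0 : 0 < α) (hα1 : α < 1) {i j : ℕ} (hj : j < i) :
    1 ≤ (i : ℝ) / |(-α) + j| := by
  have hpos := abs_den_pos hα0 hα1 j
  rw [le_div_iff₀ hpos, one_mul]
  have hji : (j : ℝ) < i := by exact_mod_cast hj
  rcases Nat.eq_zero_or_pos j with h | h
  · subst h
    simp only [Nat.cast_zero, add_zero, abs_neg, abs_of_pos hα0]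
    have : (1:ℝ) ≤ i := by exact_mod_cast hj
    linarith
  · have h1 : (1 : ℝ) ≤ j := by exact_mod_cast h
    rw [abs_of_pos (by linarith)]
    linarith

lemma factor_le (hα0 : 0 < α) (hα1 : α < 1) {i : ℕ} (hi : 1 ≤ i) (j : ℕ) :
    |(-((i : ℝ) * α)) + j| / |(-α) + j| ≤
      if j < i then (i : ℝ) / |(-α) + j| else 1 := by
  have hpos := abs_den_pos hα0 hα1 j
  have hi1 : (1 : ℝ) ≤ i := by exact_mod_cast hi
  split_ifs with h
  · refine div_le_div_of_nonneg_right ?_ hpos.le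
    have hji : (j : ℝ) < i := by exact_mod_cast h
    have h0 : (0:ℝ) ≤ (i : ℝ) * α := by positivity
    have h1 : (i:ℝ) * α ≤ i := by nlinarith
    have h2 : (0:ℝ) ≤ j := Nat.cast_nonneg j
    rw [abs_le]
    constructor <;> nlinarith
  · push_neg at h
    have hij : (i : ℝ) ≤ j := by exact_mod_cast h
    have hiα : (i : ℝ) * α < i := by nlinarith
    rw [div_le_one hpos, abs_of_nonneg (by linarith), abs_of_pos (by nlinarith)]
    nlinarith


lemma abs_Rrat_le (hα0 : 0 < α) (hα1 : α < 1) (i n : ℕ) : |Rrat α i n| ≤ Bnd α i := by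
  rcases Nat.eq_zero_or_pos i with rfl | hi
  · rcases Nat.eq_zero_or_pos n with rfl | hn
    · simp [Rrat, risingFactorial, Bnd]
    · have h0 : risingFactorial (0:ℝ) n = 0 := by
        rw [risingFactorial]
        refine Finset.prod_eq_zero (Finset.mem_range.mpr hn) ?_
        norm_num
      simp [Rrat, h0, Bnd_nonneg]
  · rw [abs_Rrat_eq]
    have step1 : ∏ j ∈ range n, (|(-((i : ℝ) * α)) + j| / |(-α) + j|) ≤
        ∏ j ∈ range n, (if j < i then (i : ℝ) / |(-α) + j| else 1) := by
      refine Finset.prod_le_prod (fun j _ => ?_) (fun j _ => factor_le hα0 hα1 hi j)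
      exact div_nonneg (abs_nonneg _) (abs_nonneg _)
    have step2 : ∏ j ∈ range n, (if j < i then (i : ℝ) / |(-α) + j| else 1) ≤
        ∏ j ∈ range (max n i), (if j < i then (i : ℝ) / |(-α) + j| else 1) := by
      rw [← Finset.prod_range_mul_prod_Ico
        (fun j => if j < i then (i : ℝ) / |(-α) + j| else 1) (le_max_left n i)]
      have hnn : (0:ℝ) ≤ ∏ j ∈ range n, (if j < i then (i : ℝ) / |(-α) + j| else 1) := by
        refine Finset.prod_nonneg fun j _ => ?_
        split_ifs
        · exact div_nonneg (Nat.cast_nonneg i) (abs_nonneg _)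
        · exact zero_le_one
      refine le_mul_of_one_le_right hnn ?_
      have h1 : ∏ j ∈ Finset.Ico n (max n i), (1:ℝ) ≤
          ∏ j ∈ Finset.Ico n (max n i), (if j < i then (i : ℝ) / |(-α) + j| else 1) := by
        refine Finset.prod_le_prod (fun _ _ => zero_le_one) (fun j _ => ?_)
        split_ifs with h
        · exact one_le_Bnd_factor hα0 hα1 h
        · exact le_refl 1
      simpa using h1
    have step3 : ∏ j ∈ range (max n i), (if j < i then (i : ℝ) / |(-α) + j| else 1)
        = Bnd α i := by
      rw [Bnd]
      refine (Finset.prod_subset (Finset.range_subset_range.mpr (le_max_right n i))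
        (fun j _ hj => ?_)).symm.trans ?_
      · rw [if_neg (by simpa using hj)]
      · refine Finset.prod_congr rfl fun j hj => ?_
        rw [if_pos (Finset.mem_range.mp hj)]
    calc _ ≤ _ := step1
      _ ≤ _ := step2
      _ = _ := step3

lemma pow_div_factorial_le_exp (x : ℝ) (hx : 0 ≤ x) (n : ℕ) :
    x ^ n / n.factorial ≤ Real.exp x := by
  refine le_trans ?_ (Real.sum_le_exp_of_nonneg hx (n + 1))
  exact Finset.single_le_sum (f := fun i => x ^ i / i.factorial)
    (fun i _ => by positivity) (Finset.mem_range.mpr (Nat.lt_succ_self n))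

lemma Cst_key (hα0 : 0 < α) (hα1 : α < 1) :
    ∀ j : ℕ, (min α (1 - α) / 2) * (j + 1) ≤ |(-α) + (j : ℝ)| := by
  intro j
  have hca : min α (1 - α) / 2 ≤ α / 2 := by
    have := min_le_left α (1 - α); linarith
  have hcb : min α (1 - α) / 2 ≤ (1 - α) / 2 := by
    have := min_le_right α (1 - α); linarith
  rcases Nat.eq_zero_or_pos j with rfl | h
  · simp only [Nat.cast_zero, add_zero, abs_neg, abs_of_pos hα0]
    linarith
  · have h1 : (1 : ℝ) ≤ j := by exact_mod_cast h
    rw [abs_of_pos (by linarith)]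
    nlinarith

lemma Bnd_le {c : ℝ} (hcpos : 0 < c)
    (hkey : ∀ j : ℕ, c * (j + 1) ≤ |(-α) + (j : ℝ)|) (i : ℕ) :
    Bnd α i ≤ (Real.exp 1 / c) ^ i := by
  have step1 : Bnd α i ≤ ∏ j ∈ range i, ((i : ℝ) / (c * (j + 1))) := by
    rw [Bnd]
    refine Finset.prod_le_prod (fun j _ => div_nonneg (Nat.cast_nonneg i) (abs_nonneg _))
      (fun j _ => ?_)
    exact div_le_div_of_nonneg_left (Nat.cast_nonneg i) (by positivity) (hkey j)
  have step2 : ∏ j ∈ range i, ((i : ℝ) / (c * (j + 1)))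
      = (i : ℝ) ^ i / (c ^ i * (i.factorial : ℝ)) := by
    rw [Finset.prod_div_distrib, Finset.prod_const, Finset.card_range,
      Finset.prod_mul_distrib, Finset.prod_const, Finset.card_range]
    congr 1
    congr 1
    rw [← Finset.prod_range_add_one_eq_factorial]
    push_cast
    rfl
  have hfact_pos : (0:ℝ) < (i.factorial : ℝ) := by exact_mod_cast i.factorial_pos
  have h1 : (i : ℝ) ^ i ≤ Real.exp 1 ^ i * (i.factorial : ℝ) := by
    have := pow_div_factorial_le_exp (i : ℝ) (Nat.cast_nonneg i) i
    rw [div_le_iff₀ hfact_pos] at this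
    rw [Real.exp_one_pow]
    exact this
  calc Bnd α i ≤ (i : ℝ) ^ i / (c ^ i * (i.factorial : ℝ)) := step1.trans_eq step2
    _ ≤ (Real.exp 1 ^ i * (i.factorial : ℝ)) / (c ^ i * (i.factorial : ℝ)) := by
        exact div_le_div_of_nonneg_right h1 (by positivity)
    _ = (Real.exp 1 / c) ^ i := by
        rw [div_pow, mul_comm (c ^ i) ((i.factorial : ℝ)), mul_comm (Real.exp 1 ^ i) _,
          mul_div_mul_left _ _ hfact_pos.ne']


-- factor bound by exponential for j ≥ i ≥ 2
lemma factor_le_exp (hα0 : 0 < α) (hα1 : α < 1) {i : ℕ} (hi : 2 ≤ i) {j : ℕ} (hj : i ≤ j) :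
    |(-((i : ℝ) * α)) + j| / |(-α) + j| ≤ Real.exp (-(α / j)) := by
  have hj1 : (1 : ℝ) ≤ j := by
    have : 1 ≤ j := le_trans (le_trans one_le_two hi) hj
    exact_mod_cast this
  have hi2 : (2 : ℝ) ≤ i := by exact_mod_cast hi
  have hij : (i : ℝ) ≤ j := by exact_mod_cast hj
  have hiα : (i : ℝ) * α < i := by nlinarith
  have hnum : (0 : ℝ) ≤ -((i : ℝ) * α) + j := by nlinarith
  have hden : (0 : ℝ) < -α + j := by linarith
  rw [abs_of_nonneg hnum, abs_of_pos hden]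
  have h2α : (2 : ℝ) * α ≤ (i : ℝ) * α := by nlinarith
  have step1 : (-((i : ℝ) * α) + j) / (-α + j) ≤ 1 - α / (-α + j) := by
    rw [div_le_iff₀ hden]
    have : α / (-α + j) * (-α + j) = α := div_mul_cancel₀ _ hden.ne'
    nlinarith [this]
  have step2 : 1 - α / (-α + j) ≤ Real.exp (-(α / (-α + j))) := by
    have := Real.add_one_le_exp (-(α / (-α + j)))
    linarith
  have step3 : Real.exp (-(α / (-α + j))) ≤ Real.exp (-(α / j)) := by
    rw [Real.exp_le_exp, neg_le_neg_iff]
    exact div_le_div_of_nonneg_left hα0.le hden (by linarith)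
  linarith

lemma harmonic_tendsto : Tendsto (fun n : ℕ => ∑ j ∈ range n, (1 / (j : ℝ))) atTop atTop := by
  rw [← tendsto_add_atTop_iff_nat 1]
  have h : ∀ n : ℕ, ∑ j ∈ range (n + 1), (1 / (j : ℝ))
      = ∑ m ∈ range n, (1 / ((m : ℝ) + 1)) := by
    intro n
    rw [Finset.sum_range_succ']
    push_cast
    norm_num
  simp only [h]
  exact Real.tendsto_sum_range_one_div_nat_succ_atTop

lemma Rrat_tendsto_zero (hα0 : 0 < α) (hα1 : α < 1) {i : ℕ} (hi : 2 ≤ i) :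
    Tendsto (fun n => Rrat α i n) atTop (nhds 0) := by
  rw [tendsto_zero_iff_abs_tendsto_zero]
  have hbound : ∀ n, i ≤ n →
      |Rrat α i n| ≤ Bnd α i * Real.exp ((-α) * ∑ j ∈ Finset.Ico i n, (1 / (j : ℝ))) := by
    intro n hn
    rw [abs_Rrat_eq, ← Finset.prod_range_mul_prod_Ico _ hn]
    have h1 : ∏ j ∈ range i, (|(-((i : ℝ) * α)) + j| / |(-α) + j|) ≤ Bnd α i := by
      rw [Bnd]
      refine Finset.prod_le_prod (fun j _ => div_nonneg (abs_nonneg _) (abs_nonneg _))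
        (fun j hj => ?_)
      have := factor_le hα0 hα1 (le_trans (by norm_num) hi) j
      rwa [if_pos (Finset.mem_range.mp hj)] at this
    have h2 : ∏ j ∈ Finset.Ico i n, (|(-((i : ℝ) * α)) + j| / |(-α) + j|)
        ≤ Real.exp ((-α) * ∑ j ∈ Finset.Ico i n, (1 / (j : ℝ))) := by
      have : Real.exp ((-α) * ∑ j ∈ Finset.Ico i n, (1 / (j : ℝ)))
          = ∏ j ∈ Finset.Ico i n, Real.exp (-(α / j)) := by
        rw [← Real.exp_sum]
        congr 1
        rw [Finset.mul_sum]
        refine Finset.sum_congr rfl fun j _ => ?_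
        rw [div_eq_mul_one_div α]
        ring
      rw [this]
      refine Finset.prod_le_prod (fun j _ => div_nonneg (abs_nonneg _) (abs_nonneg _))
        (fun j hj => factor_le_exp hα0 hα1 hi (Finset.mem_Ico.mp hj).1)
    calc _ ≤ Bnd α i * ∏ j ∈ Finset.Ico i n, (|(-((i : ℝ) * α)) + j| / |(-α) + j|) := by
            refine mul_le_mul_of_nonneg_right h1 ?_
            exact Finset.prod_nonneg fun j _ => div_nonneg (abs_nonneg _) (abs_nonneg _)
      _ ≤ _ := mul_le_mul_of_nonneg_left h2 (Bnd_nonneg i)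
  refine squeeze_zero' (Eventually.of_forall fun n => abs_nonneg _)
    (eventually_atTop.mpr ⟨i, hbound⟩) ?_
  have hS : Tendsto (fun n => ∑ j ∈ Finset.Ico i n, (1 / (j : ℝ))) atTop atTop := by
    have hcongr : ∀ᶠ n in atTop, ∑ j ∈ Finset.Ico i n, (1 / (j : ℝ))
        = ∑ j ∈ range n, (1 / (j : ℝ)) - ∑ j ∈ range i, (1 / (j : ℝ)) := by
      refine eventually_atTop.mpr ⟨i, fun n hn => ?_⟩
      rw [Finset.sum_Ico_eq_sub _ hn]
    refine Tendsto.congr' (hcongr.mono fun n h => h.symm) ?_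
    exact tendsto_atTop_add_const_right _ _ harmonic_tendsto
  have hexp : Tendsto (fun n => Real.exp ((-α) * ∑ j ∈ Finset.Ico i n, (1 / (j : ℝ))))
      atTop (nhds 0) := by
    refine Real.tendsto_exp_atBot.comp ?_
    exact Tendsto.const_mul_atTop_of_neg (by linarith) hS
  have := hexp.const_mul (Bnd α i)
  simpa using this


lemma exp_partial_tendsto (z : ℝ) :
    Tendsto (fun m : ℕ => ∑ t ∈ range (m + 1), z ^ t / (t.factorial : ℝ)) atTop
      (nhds (Real.exp z)) := by
  have hsum : HasSum (fun t : ℕ => z ^ t / (t.factorial : ℝ)) (Real.exp z) := by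
    have hs := Real.summable_pow_div_factorial z
    have : (∑' n : ℕ, z ^ n / (n.factorial : ℝ)) = Real.exp z := by
      rw [Real.exp_eq_exp_ℝ, NormedSpace.exp_eq_tsum_div]
    exact this ▸ hs.hasSum
  have h := hsum.tendsto_sum_nat
  exact (tendsto_add_atTop_iff_nat 1).mpr h

lemma bound_summable (hα0 : 0 < α) (hα1 : α < 1) (hz : 0 < z) :
    Summable (fun i : ℕ => Real.exp z * (z ^ i / (i.factorial : ℝ)) * Bnd α i) := by
  set c : ℝ := min α (1 - α) / 2 with hc
  have hmin : 0 < min α (1 - α) := lt_min hα0 (by linarith)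
  have hcpos : 0 < c := by rw [hc]; linarith
  have hg : Summable (fun i : ℕ => Real.exp z * ((z * (Real.exp 1 / c)) ^ i / (i.factorial : ℝ))) :=
    (Real.summable_pow_div_factorial (z * (Real.exp 1 / c))).mul_left _
  refine Summable.of_nonneg_of_le (fun i => ?_) (fun i => ?_) hg
  · have := Bnd_nonneg (α := α) i
    positivity
  · have hB := Bnd_le hcpos (Cst_key hα0 hα1) i
    have h1 : Real.exp z * (z ^ i / (i.factorial : ℝ)) * Bnd α i
        ≤ Real.exp z * (z ^ i / (i.factorial : ℝ)) * (Real.exp 1 / c) ^ i := by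
      refine mul_le_mul_of_nonneg_left hB (by positivity)
    refine h1.trans_eq ?_
    rw [mul_pow]
    ring

-- the key identity
lemma key_sum (hα0 : 0 < α) (hα1 : α < 1) (z : ℝ) (n : ℕ) :
    (∑ j ∈ range (n + 1), z ^ j * genFacCoef n j α) / risingFactorial (-α) n
    = ∑ i ∈ range (n + 1), (-1 : ℝ) ^ i * (z ^ i / (i.factorial : ℝ)) *
        (∑ t ∈ range (n - i + 1), z ^ t / (t.factorial : ℝ)) * Rrat α i n := by
  rw [Finset.sum_div]
  have hstep1 : ∀ j ∈ range (n + 1),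
      z ^ j * genFacCoef n j α / risingFactorial (-α) n
      = ∑ i ∈ range (n + 1),
          z ^ j * (1 / (j.factorial : ℝ)) *
            ((-1 : ℝ) ^ i * (j.choose i : ℝ) * Rrat α i n) := by
    intro j hj
    have hin' : j ≤ n := Nat.lt_succ_iff.mp (Finset.mem_range.mp hj)
    have hA : z ^ j * genFacCoef n j α / risingFactorial (-α) n
        = ∑ i ∈ range (j + 1), z ^ j * (1 / (j.factorial : ℝ)) *
            ((-1 : ℝ) ^ i * (j.choose i : ℝ) * Rrat α i n) := by
      rw [genFacCoef, Finset.mul_sum, Finset.mul_sum, Finset.sum_div]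
      refine Finset.sum_congr rfl fun i _ => ?_
      rw [Rrat]
      ring
    rw [hA]
    refine Finset.sum_subset (Finset.range_subset_range.mpr (Nat.succ_le_succ hin'))
      fun i _ hi => ?_
    have hji : j < i := by
      by_contra hcon
      exact hi (Finset.mem_range.mpr (by omega))
    rw [Nat.choose_eq_zero_of_lt hji]
    simp
  rw [Finset.sum_congr rfl hstep1, Finset.sum_comm]
  refine Finset.sum_congr rfl fun i hi => ?_
  have hin : i ≤ n := Nat.lt_succ_iff.mp (Finset.mem_range.mp hi)
  -- inner sum over j
  have hinner : ∑ j ∈ range (n + 1),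
      z ^ j * (1 / (j.factorial : ℝ)) * ((-1 : ℝ) ^ i * (j.choose i : ℝ) * Rrat α i n)
      = ((-1 : ℝ) ^ i * Rrat α i n) *
          ∑ j ∈ range (n + 1), z ^ j * (j.choose i : ℝ) / (j.factorial : ℝ) := by
    rw [Finset.mul_sum]
    refine Finset.sum_congr rfl fun j _ => by ring
  rw [hinner]
  have hdrop : ∑ j ∈ range (n + 1), z ^ j * (j.choose i : ℝ) / (j.factorial : ℝ)
      = ∑ j ∈ Finset.Ico i (n + 1), z ^ j * (j.choose i : ℝ) / (j.factorial : ℝ) := by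
    refine (Finset.sum_subset ?_ fun j _ hj => ?_).symm
    · intro x hx
      exact Finset.mem_range.mpr (Finset.mem_Ico.mp hx).2
    · have hji : j < i := by
        have h1 := Finset.mem_range.mp ‹j ∈ range (n + 1)›
        by_contra hcon
        exact hj (Finset.mem_Ico.mpr ⟨Nat.le_of_not_lt hcon, h1⟩)
      rw [Nat.choose_eq_zero_of_lt hji]
      simp
  rw [hdrop, Finset.sum_Ico_eq_sum_range]
  have hlen : n + 1 - i = n - i + 1 := by omega
  rw [hlen]
  have hterm : ∀ m, z ^ (i + m) * ((i + m).choose i : ℝ) / ((i + m).factorial : ℝ)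
      = (z ^ i / (i.factorial : ℝ)) * (z ^ m / (m.factorial : ℝ)) := by
    intro m
    have hC : (0 : ℝ) < ((i + m).choose i : ℝ) := by
      exact_mod_cast Nat.choose_pos (Nat.le_add_right i m)
    have hfact : (((i + m).factorial : ℝ)) = ((i + m).choose i : ℝ) * (i.factorial : ℝ) * (m.factorial : ℝ) := by
      have h := Nat.add_choose_mul_factorial_mul_factorial i m
      rw [← Nat.choose_symm_add] at h
      exact_mod_cast h.symm
    rw [hfact, pow_add]
    have hif : (0:ℝ) < (i.factorial : ℝ) := by exact_mod_cast i.factorial_pos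
    have hmf : (0:ℝ) < (m.factorial : ℝ) := by exact_mod_cast m.factorial_pos
    field_simp
  rw [Finset.sum_congr rfl fun m _ => hterm m, ← Finset.mul_sum]
  ring


end AuxPoisson

theorem normalized_genFacCoef_tendsto_poisson (z : ℝ) (hz : 0 < z) (k : ℕ) (hk : 1 ≤ k)
    (α : ℝ) (hα : α ∈ Set.Ioo 0 1) :
    Filter.Tendsto (fun n : ℕ =>
        z ^ k * genFacCoef n k α / ∑ j ∈ Finset.range (n + 1), z ^ j * genFacCoef n j α)
      Filter.atTop
      (nhds (Real.exp (-z) * z ^ (k - 1) / ((k - 1).factorial : ℝ))) := by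
  obtain ⟨hα0, hα1⟩ := hα
  set D : ℕ → ℝ := fun n => risingFactorial (-α) n with hDdef
  have hD : ∀ n, D n ≠ 0 := fun n => rf_neg_alpha_ne_zero hα0 hα1 n
  set E : ℕ → ℝ := fun m => ∑ t ∈ range (m + 1), z ^ t / (t.factorial : ℝ) with hEdef
  have hE0 : ∀ m, 0 ≤ E m := by
    intro m
    exact Finset.sum_nonneg fun t _ => by positivity
  have hEle : ∀ m, E m ≤ Real.exp z := fun m => Real.sum_le_exp_of_nonneg hz.le (m + 1)
  set F : ℕ → ℕ → ℝ := fun n i =>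
    if i ≤ n then (-1 : ℝ) ^ i * (z ^ i / (i.factorial : ℝ)) * E (n - i) * Rrat α i n else 0
    with hFdef
  -- |F n i| bound
  have hFabs : ∀ n i, |F n i| ≤ Real.exp z * (z ^ i / (i.factorial : ℝ)) * |Rrat α i n| := by
    intro n i
    simp only [hFdef]
    by_cases h : i ≤ n
    · rw [if_pos h]
      have h1 : |(-1 : ℝ) ^ i * (z ^ i / (i.factorial : ℝ)) * E (n - i) * Rrat α i n|
          = (z ^ i / (i.factorial : ℝ)) * E (n - i) * |Rrat α i n| := by
        rw [abs_mul, abs_mul, abs_mul, abs_pow, abs_neg, abs_one, one_pow, one_mul,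
          abs_of_nonneg (show (0:ℝ) ≤ z ^ i / (i.factorial : ℝ) by positivity),
          abs_of_nonneg (hE0 _)]
      rw [h1]
      have h2 : (z ^ i / (i.factorial : ℝ)) * E (n - i) ≤ (z ^ i / (i.factorial : ℝ)) * Real.exp z :=
        mul_le_mul_of_nonneg_left (hEle _) (by positivity)
      calc (z ^ i / (i.factorial : ℝ)) * E (n - i) * |Rrat α i n|
          ≤ (z ^ i / (i.factorial : ℝ)) * Real.exp z * |Rrat α i n| :=
            mul_le_mul_of_nonneg_right h2 (abs_nonneg _)
        _ = Real.exp z * (z ^ i / (i.factorial : ℝ)) * |Rrat α i n| := by ring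
    · rw [if_neg h]
      simp only [abs_zero]
      positivity
  -- denominator limit
  have hDen : Tendsto (fun n => (∑ j ∈ range (n + 1), z ^ j * genFacCoef n j α) / D n)
      atTop (nhds (-(z * Real.exp z))) := by
    have htsum : ∀ n, (∑' i, F n i)
        = (∑ j ∈ range (n + 1), z ^ j * genFacCoef n j α) / D n := by
      intro n
      rw [hDdef, key_sum hα0 hα1 z n]
      rw [tsum_eq_sum (s := range (n + 1)) (f := F n) (fun i hi => by
        simp only [hFdef]
        exact if_neg (fun hle => hi (Finset.mem_range.mpr (Nat.lt_succ_of_le hle))))]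
      refine Finset.sum_congr rfl fun i hi => ?_
      simp only [hFdef]
      rw [if_pos (Nat.lt_succ_iff.mp (Finset.mem_range.mp hi))]
    have hlimval : -(z * Real.exp z)
        = ∑' i : ℕ, (fun i => if i = 1 then -(z * Real.exp z) else 0) i :=
      (tsum_ite_eq 1 (fun _ => -(z * Real.exp z))).symm
    have hDC : Tendsto (fun n => ∑' i, F n i) atTop
        (nhds (∑' i : ℕ, (fun i => if i = 1 then -(z * Real.exp z) else 0) i)) := by
      refine tendsto_tsum_of_dominated_convergence
        (bound := fun i => Real.exp z * (z ^ i / (i.factorial : ℝ)) * Bnd α i)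
        (bound_summable hα0 hα1 hz) (fun i => ?_) ?_
      · -- pointwise limits
        match i with
        | 0 =>
          simp only [if_neg (by norm_num : (0:ℕ) ≠ 1)]
          refine Tendsto.congr' ?_ tendsto_const_nhds
          filter_upwards [eventually_ge_atTop 1] with n hn
          simp only [hFdef]
          rw [if_pos (Nat.zero_le n), Rrat_zero hα0 hα1 hn, mul_zero]
        | 1 =>
          simp only [if_pos rfl]
          have h1 : Tendsto (fun n : ℕ => E (n - 1)) atTop (nhds (Real.exp z)) :=
            (exp_partial_tendsto z).comp (tendsto_sub_atTop_nat 1)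
          have h2 := h1.const_mul ((-1 : ℝ) ^ 1 * (z ^ 1 / ((1 : ℕ).factorial : ℝ)))
          have hval : ((-1 : ℝ) ^ 1 * (z ^ 1 / ((1 : ℕ).factorial : ℝ))) * Real.exp z
              = -(z * Real.exp z) := by norm_num
          rw [← hval]
          refine Tendsto.congr' ?_ h2
          filter_upwards [eventually_ge_atTop 1] with n hn
          simp only [hFdef]
          rw [if_pos hn, Rrat_one hα0 hα1, mul_one]
        | (i + 2) =>
          simp only [if_neg (by omega : ¬ i + 2 = 1)]
          rw [tendsto_zero_iff_abs_tendsto_zero]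
          have hlim : Tendsto (fun n => Real.exp z * (z ^ (i+2) / ((i+2).factorial : ℝ))
              * |Rrat α (i+2) n|) atTop (nhds 0) := by
            have h := (Rrat_tendsto_zero hα0 hα1 (by omega : 2 ≤ i + 2)).abs
            simp only [abs_zero] at h
            have := h.const_mul (Real.exp z * (z ^ (i+2) / ((i+2).factorial : ℝ)))
            simpa [mul_assoc] using this
          exact squeeze_zero (fun n => abs_nonneg _) (fun n => hFabs n (i+2)) hlim
      · -- domination
        refine Eventually.of_forall fun n i => ?_
        rw [Real.norm_eq_abs]
        refine (hFabs n i).trans ?_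
        exact mul_le_mul_of_nonneg_left (abs_Rrat_le hα0 hα1 i n) (by positivity)
    rw [hlimval]
    exact hDC.congr htsum
  -- numerator limit
  have hNum : Tendsto (fun n => z ^ k * genFacCoef n k α / D n) atTop
      (nhds (-(z ^ k / ((k - 1).factorial : ℝ)))) := by
    have hrepr : ∀ n, z ^ k * genFacCoef n k α / D n
        = ∑ i ∈ range (k + 1),
            (z ^ k * (1 / (k.factorial : ℝ))) * ((-1 : ℝ) ^ i * (k.choose i : ℝ) * Rrat α i n) := by
      intro n
      rw [hDdef, genFacCoef, Finset.mul_sum, Finset.mul_sum, Finset.sum_div]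
      refine Finset.sum_congr rfl fun i _ => ?_
      rw [Rrat]
      ring
    have hterm : ∀ i ∈ range (k + 1), Tendsto
        (fun n => (z ^ k * (1 / (k.factorial : ℝ))) * ((-1 : ℝ) ^ i * (k.choose i : ℝ) * Rrat α i n))
        atTop (nhds (if i = 1 then (z ^ k * (1 / (k.factorial : ℝ))) * (-(k : ℝ)) else 0)) := by
      intro i _
      match i with
      | 0 =>
        rw [if_neg (by norm_num)]
        refine Tendsto.congr' ?_ tendsto_const_nhds
        filter_upwards [eventually_ge_atTop 1] with n hn
        rw [Rrat_zero hα0 hα1 hn]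
        ring
      | 1 =>
        rw [if_pos rfl]
        have : ∀ n : ℕ, (z ^ k * (1 / (k.factorial : ℝ)))
            * ((-1 : ℝ) ^ 1 * (k.choose 1 : ℝ) * Rrat α 1 n)
            = (z ^ k * (1 / (k.factorial : ℝ))) * (-(k : ℝ)) := by
          intro n
          rw [Rrat_one hα0 hα1, Nat.choose_one_right]
          ring
        simp only [this]
        exact tendsto_const_nhds
      | (i + 2) =>
        rw [if_neg (by omega)]
        have h := (Rrat_tendsto_zero hα0 hα1 (by omega : 2 ≤ i + 2)).const_mul
          ((z ^ k * (1 / (k.factorial : ℝ))) * ((-1 : ℝ) ^ (i+2) * (k.choose (i+2) : ℝ)))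
        simp only [mul_zero] at h
        refine h.congr fun n => by ring
    have hsum := tendsto_finset_sum (range (k + 1)) hterm
    have hval : ∑ i ∈ range (k + 1),
        (if i = 1 then (z ^ k * (1 / (k.factorial : ℝ))) * (-(k : ℝ)) else 0)
        = -(z ^ k / ((k - 1).factorial : ℝ)) := by
      rw [Finset.sum_ite_eq' (range (k + 1)) 1
        (fun _ => (z ^ k * (1 / (k.factorial : ℝ))) * (-(k : ℝ)))]
      rw [if_pos (Finset.mem_range.mpr (by omega))]
      have hkf : (k.factorial : ℝ) = (k : ℝ) * ((k - 1).factorial : ℝ) := by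
        exact_mod_cast (Nat.mul_factorial_pred (by omega : k ≠ 0)).symm
      have hk0 : (k : ℝ) ≠ 0 := by exact_mod_cast (by omega : k ≠ 0)
      have hkf0 : ((k - 1).factorial : ℝ) ≠ 0 := by
        exact_mod_cast (k - 1).factorial_ne_zero
      rw [hkf]
      field_simp
    rw [← hval]
    exact hsum.congr fun n => (hrepr n).symm
  -- assemble
  have hden_ne : -(z * Real.exp z) ≠ 0 :=
    neg_ne_zero.mpr (mul_pos hz (Real.exp_pos z)).ne'
  have h := hNum.div hDen hden_ne
  have h := h.congr (fun n => by
    simp only [Pi.div_apply]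
    rw [div_div_div_cancel_right₀ (hD n)])
  have hvfinal : -(z ^ k / ((k - 1).factorial : ℝ)) / -(z * Real.exp z)
      = Real.exp (-z) * z ^ (k - 1) / ((k - 1).factorial : ℝ) := by
    have hk1 : k - 1 + 1 = k := by omega
    have hkf0 : ((k - 1).factorial : ℝ) ≠ 0 := by exact_mod_cast (k - 1).factorial_ne_zero
    have hzne : z ≠ 0 := hz.ne'
    have hexpne : Real.exp z ≠ 0 := (Real.exp_pos z).ne'
    rw [neg_div_neg_eq, ← hk1, pow_succ, Real.exp_neg]
    field_simp
    ring
    congr 1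
    omega
  rw [hvfinal] at h
  exact h
end
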